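/- arXiv:2412.15170 — 3 statements merged into one kernel-verified Lean document; each statement's English description precedes it below -/
import Mathlib

section
/- Let H_2 ≤ H_1 ≤ F_p^n be subspaces with codim_{H_1}(H_2) = d, and let f : F_p^n → [0,1]. If a coset C_1 of H_1 is ε-regular for f (i.e., |E_{x∈C_1}(f(x) − α_1)e_p(r^T x)| ≤ ε for all r, where α_1 is the average of f on C_1), then for any coset C_2 of H_2 with C_2 ⊆ C_1: (i) C_2 is p^d·ε-regular for f, and (ii) the averages of f on C_1 and C_2 differ by at most p^d·ε. -/
open Matrix Pointwise
open scoped Classical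

/-- `e_p(t) = exp(2πit/p)`. -/
noncomputable def ep (p : ℕ) (t : ZMod p) : ℂ :=
  Complex.exp (2 * Real.pi * Complex.I * t.val / p)

/-- The average of `f` on the coset `c + H`. -/
noncomputable def cosetAvg {p n : ℕ} [Fact p.Prime]
    (H : Submodule (ZMod p) (Fin n → ZMod p)) (c : Fin n → ZMod p)
    (f : (Fin n → ZMod p) → ℝ) : ℝ :=
  (∑ h : H, f (c + h)) / (Fintype.card H)

/-- `f` is `ε`-regular (ε-uniform) on the coset `c + H`: every Fourier coefficient of
`f − (its average on the coset)` restricted to the coset is at most `ε`. -/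
noncomputable def epsRegular {p n : ℕ} [Fact p.Prime] (ε : ℝ)
    (H : Submodule (ZMod p) (Fin n → ZMod p)) (c : Fin n → ZMod p)
    (f : (Fin n → ZMod p) → ℝ) : Prop :=
  ∀ r : Fin n → ZMod p,
    ‖(∑ h : H, ((f (c + h) - cosetAvg H c f : ℝ) : ℂ) * ep p (r ⬝ᵥ (c + h))) /
      (Fintype.card H)‖ ≤ ε

section Aux

set_option linter.unusedSectionVars false

variable {p : ℕ} [Fact p.Prime]

lemma ep_eq_pow (t : ZMod p) :
    ep p t = Complex.exp (2 * Real.pi * Complex.I / p) ^ t.val := by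
  rw [← Complex.exp_nat_mul, ep]
  congr 1
  ring

lemma zeta_pow_p : Complex.exp (2 * Real.pi * Complex.I / p) ^ p = 1 := by
  have hp : (p : ℂ) ≠ 0 := by
    exact_mod_cast (Fact.out : p.Prime).pos.ne'
  rw [← Complex.exp_nat_mul]
  rw [show (p : ℂ) * (2 * Real.pi * Complex.I / p) = 2 * Real.pi * Complex.I by
    field_simp]
  exact Complex.exp_two_pi_mul_I

lemma ep_zero : ep p 0 = 1 := by
  simp [ep]

lemma ep_add (a b : ZMod p) : ep p (a + b) = ep p a * ep p b := by
  rw [ep_eq_pow, ep_eq_pow, ep_eq_pow, ← pow_add, ZMod.val_add]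
  exact (pow_eq_pow_mod _ zeta_pow_p).symm

lemma norm_ep (t : ZMod p) : ‖ep p t‖ = 1 := by
  rw [ep, show (2 * Real.pi * Complex.I * t.val / p)
      = ((2 * Real.pi * t.val / p : ℝ) : ℂ) * Complex.I by push_cast; ring]
  exact Complex.norm_exp_ofReal_mul_I _

lemma ep_one_ne_one : ep p (1 : ZMod p) ≠ 1 := by
  have hp1 : 1 < p := (Fact.out : p.Prime).one_lt
  rw [ep, ZMod.val_one]
  intro h
  rw [Complex.exp_eq_one_iff] at h
  obtain ⟨k, hk⟩ := h
  have hp : (p : ℂ) ≠ 0 := by exact_mod_cast (Fact.out : p.Prime).pos.ne'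
  have h2 : (2 * Real.pi * Complex.I) * 1 = (2 * Real.pi * Complex.I) * (k * p) := by
    field_simp at hk ⊢
    linear_combination hk
  have h3 : (1 : ℂ) = k * p := by
    have := mul_left_cancel₀ Complex.two_pi_I_ne_zero h2
    simpa using this
  have h4 : (1 : ℤ) = k * p := by exact_mod_cast h3
  have hdvd : (p : ℤ) ∣ 1 := ⟨k, by linarith [h4]⟩
  have := Int.le_of_dvd one_pos hdvd
  omega

/-- Character sum over a finite `ZMod p`-module against a nonzero linear functional
vanishes. -/
lemma sum_ep_linear_eq_zero {M : Type*} [AddCommGroup M] [Module (ZMod p) M] [Fintype M]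
    (φ : M →ₗ[ZMod p] ZMod p) (hφ : φ ≠ 0) :
    ∑ s : M, ep p (φ s) = 0 := by
  obtain ⟨s, hs⟩ : ∃ s, φ s ≠ 0 := by
    by_contra h; push_neg at h; exact hφ (LinearMap.ext (by simpa using h))
  set s0 := (φ s)⁻¹ • s with hs0
  have h1 : φ s0 = 1 := by
    rw [hs0, LinearMap.map_smul, smul_eq_mul, inv_mul_cancel₀ hs]
  have key : ep p 1 * ∑ t : M, ep p (φ t) = ∑ t : M, ep p (φ t) := by
    rw [Finset.mul_sum]
    have hterm : ∀ t : M, ep p 1 * ep p (φ t) = ep p (φ (s0 + t)) := by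
      intro t
      rw [map_add, h1, ep_add]
    simp_rw [hterm]
    exact Fintype.sum_bijective (fun t => s0 + t)
      (Equiv.addLeft s0).bijective _ _ (fun t => rfl)
  have h0 : (ep p 1 - 1) * ∑ t : M, ep p (φ t) = 0 := by
    rw [sub_mul, one_mul, key, sub_self]
  rcases mul_eq_zero.mp h0 with h | h
  · exact absurd (sub_eq_zero.mp h) ep_one_ne_one
  · exact h

variable {n : ℕ}

/-- The annihilator of `H` under the dot-product pairing. -/
def dotAnn (H : Submodule (ZMod p) (Fin n → ZMod p)) :
    Submodule (ZMod p) (Fin n → ZMod p) where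
  carrier := {s | ∀ h ∈ H, s ⬝ᵥ h = 0}
  add_mem' := by
    intro a b ha hb h hh
    rw [add_dotProduct, ha h hh, hb h hh, add_zero]
  zero_mem' := by intro h hh; simp
  smul_mem' := by
    intro c a ha h hh
    rw [smul_dotProduct, ha h hh, smul_zero]

/-- If `x ∉ H` then some vector annihilating `H` does not annihilate `x`. -/
lemma exists_dotAnn_ne {H : Submodule (ZMod p) (Fin n → ZMod p)}
    {x : Fin n → ZMod p} (hx : x ∉ H) :
    ∃ s, (∀ h ∈ H, s ⬝ᵥ h = 0) ∧ s ⬝ᵥ x ≠ 0 := by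
  have hx' : H.mkQ x ≠ 0 := by
    simpa [Submodule.mkQ_apply, Submodule.Quotient.mk_eq_zero] using hx
  obtain ⟨g, hg⟩ : ∃ g : Module.Dual (ZMod p) ((Fin n → ZMod p) ⧸ H),
      g (H.mkQ x) ≠ 0 := by
    by_contra h
    push_neg at h
    exact hx' ((Module.forall_dual_apply_eq_zero_iff (ZMod p) _).mp h)
  set F := g ∘ₗ H.mkQ with hF
  have hsingle : ∀ (i : Fin n) (a : ZMod p),
      Pi.single i a = a • Pi.single (M := fun _ : Fin n => ZMod p) i 1 := by
    intro i a
    ext j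
    by_cases h : j = i <;> simp [Pi.single_apply, h]
  have key : ∀ y : Fin n → ZMod p, (fun i => F (Pi.single i 1)) ⬝ᵥ y = F y := by
    intro y
    conv_rhs => rw [← Finset.univ_sum_single y]
    rw [map_sum, dotProduct]
    refine Finset.sum_congr rfl fun i _ => ?_
    rw [hsingle i (y i), LinearMap.map_smul, smul_eq_mul, mul_comm]
  refine ⟨fun i => F (Pi.single i 1), ?_, ?_⟩
  · intro h hh
    rw [key]
    simp [hF, Submodule.mkQ_apply, (Submodule.Quotient.mk_eq_zero H).mpr hh]
  · rw [key]
    simpa [hF] using hg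

/-- The indicator of `H` via Fourier over the dot-product annihilator. -/
lemma sum_dotAnn (H : Submodule (ZMod p) (Fin n → ZMod p)) (x : Fin n → ZMod p) :
    ∑ s : dotAnn H, ep p ((s : Fin n → ZMod p) ⬝ᵥ x)
      = if x ∈ H then (Fintype.card (dotAnn H) : ℂ) else 0 := by
  by_cases hx : x ∈ H
  · rw [if_pos hx]
    rw [Finset.sum_congr rfl (fun s _ => by rw [s.2 x hx, ep_zero])]
    simp
  · rw [if_neg hx]
    set φlin : dotAnn H →ₗ[ZMod p] ZMod p :=
      { toFun := fun s => (s : Fin n → ZMod p) ⬝ᵥ x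
        map_add' := fun a b => add_dotProduct _ _ _
        map_smul' := fun c a => by simp [smul_dotProduct] } with hφlin
    obtain ⟨s, hs1, hs2⟩ := exists_dotAnn_ne hx
    have hφ : φlin ≠ 0 := by
      intro h
      exact hs2 (by simpa [hφlin] using congrFun (congrArg (fun ψ => ψ.toFun) h) ⟨s, hs1⟩)
    have := sum_ep_linear_eq_zero φlin hφ
    simpa [hφlin] using this

/-- Sum over a coset of a submodule as a full sum with indicator. -/
lemma sum_coset (H : Submodule (ZMod p) (Fin n → ZMod p)) (c : Fin n → ZMod p)
    (F : (Fin n → ZMod p) → ℂ) :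
    ∑ h : H, F (c + h) = ∑ x : Fin n → ZMod p, if x - c ∈ H then F x else 0 := by
  let e : H ≃ {x : Fin n → ZMod p // x - c ∈ H} :=
    { toFun := fun h => ⟨c + h, by simpa using h.2⟩
      invFun := fun x => ⟨x.1 - c, x.2⟩
      left_inv := fun h => by ext; simp
      right_inv := fun x => by ext; simp }
  calc ∑ h : H, F (c + h) = ∑ x : {x : Fin n → ZMod p // x - c ∈ H}, F x.1 :=
        Fintype.sum_equiv e _ _ (fun h => rfl)
    _ = ∑ x ∈ Finset.univ.filter (fun x : Fin n → ZMod p => x - c ∈ H), F x :=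
        (Finset.sum_subtype _ (by simp) F).symm
    _ = ∑ x : Fin n → ZMod p, if x - c ∈ H then F x else 0 :=
        (Finset.sum_filter _ _)

end Aux

set_option maxHeartbeats 1000000 in
/-- regularity is inherited by subcosets, with the constant `p^d`, where `d`
is the codimension of `H₂` inside `H₁`; likewise for the coset averages. -/
theorem regularity_inherited_by_subcosets {p n : ℕ} [Fact p.Prime] (d : ℕ)
    (H1 H2 : Submodule (ZMod p) (Fin n → ZMod p)) (hle : H2 ≤ H1)
    (hcodim : Module.finrank (ZMod p) H1 = Module.finrank (ZMod p) H2 + d)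
    (f : (Fin n → ZMod p) → ℝ) (hf : ∀ x, f x ∈ Set.Icc (0 : ℝ) 1)
    (ε : ℝ) (c1 c2 : Fin n → ZMod p)
    (hsub : c2 +ᵥ (H2 : Set (Fin n → ZMod p)) ⊆ c1 +ᵥ (H1 : Set (Fin n → ZMod p)))
    (hreg : epsRegular ε H1 c1 f) :
    epsRegular ((p : ℝ) ^ d * ε) H2 c2 f ∧
      |cosetAvg H2 c2 f - cosetAvg H1 c1 f| ≤ (p : ℝ) ^ d * ε := by
  classical
  unfold epsRegular at hreg ⊢
  have hε : 0 ≤ ε := le_trans (norm_nonneg _) (hreg 0)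
  set α1 := cosetAvg H1 c1 f with hα1
  set α2 := cosetAvg H2 c2 f with hα2
  have hcard2pos : 0 < Fintype.card H2 := Fintype.card_pos
  have hcard1pos : 0 < Fintype.card H1 := Fintype.card_pos
  have hAnnpos : 0 < Fintype.card (dotAnn H2) := Fintype.card_pos
  have hcards : (Fintype.card H1 : ℝ) = (p : ℝ) ^ d * Fintype.card H2 := by
    rw [Module.card_eq_pow_finrank (K := ZMod p) (V := H1),
        Module.card_eq_pow_finrank (K := ZMod p) (V := H2), ZMod.card, hcodim, pow_add]
    push_cast; ring
  have hsub' : ∀ x : Fin n → ZMod p, x - c2 ∈ H2 → x - c1 ∈ H1 := by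
    intro x hx
    have hmem : x ∈ c2 +ᵥ (H2 : Set (Fin n → ZMod p)) := by
      rw [Set.mem_vadd_set_iff_neg_vadd_mem]
      simpa [vadd_eq_add, neg_add_eq_sub] using hx
    have hm2 := hsub hmem
    rw [Set.mem_vadd_set_iff_neg_vadd_mem] at hm2
    simpa [vadd_eq_add, neg_add_eq_sub] using hm2
  -- the H1-coset Fourier sums are bounded by ε * |H1|
  have hT : ∀ r' : Fin n → ZMod p,
      ‖∑ h : H1, ((f (c1 + h) - α1 : ℝ) : ℂ) * ep p (r' ⬝ᵥ (c1 + h))‖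
        ≤ ε * Fintype.card H1 := by
    intro r'
    have h := hreg r'
    rw [norm_div] at h
    have hc : ‖((Fintype.card H1 : ℕ) : ℂ)‖ = (Fintype.card H1 : ℝ) := by
      simp
    rw [hc, div_le_iff₀ (by exact_mod_cast hcard1pos)] at h
    linarith
  -- main estimate: Fourier sums of f - α1 over the H2-coset
  have main : ∀ r : Fin n → ZMod p,
      ‖∑ h : H2, ((f (c2 + h) - α1 : ℝ) : ℂ) * ep p (r ⬝ᵥ (c2 + h))‖
        ≤ ε * Fintype.card H1 := by
    intro r
    set N := ((Fintype.card (dotAnn H2) : ℕ) : ℂ) with hN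
    have hN0 : N ≠ 0 := by
      rw [hN]; exact_mod_cast hAnnpos.ne'
    set G : (Fin n → ZMod p) → ℂ :=
      fun x => ((f x - α1 : ℝ) : ℂ) * ep p (r ⬝ᵥ x) with hG
    have step1 : ∑ h : H2, ((f (c2 + h) - α1 : ℝ) : ℂ) * ep p (r ⬝ᵥ (c2 + h))
        = ∑ x : Fin n → ZMod p, if x - c2 ∈ H2 then G x else 0 := sum_coset H2 c2 G
    have step2 : ∀ x : Fin n → ZMod p, (if x - c2 ∈ H2 then G x else 0)
        = (∑ s : dotAnn H2, ep p ((s : Fin n → ZMod p) ⬝ᵥ (x - c2))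
            * (if x - c1 ∈ H1 then G x else 0)) / N := by
      intro x
      by_cases hx : x - c2 ∈ H2
      · rw [if_pos hx, ← Finset.sum_mul, sum_dotAnn, if_pos hx, if_pos (hsub' x hx),
          ← hN, mul_comm, mul_div_assoc, div_self hN0, mul_one]
      · rw [if_neg hx, ← Finset.sum_mul, sum_dotAnn, if_neg hx, zero_mul, zero_div]
    have inner : ∀ s : dotAnn H2,
        ∑ x : Fin n → ZMod p,
          ep p ((s : Fin n → ZMod p) ⬝ᵥ (x - c2)) * (if x - c1 ∈ H1 then G x else 0)
        = ep p (-((s : Fin n → ZMod p) ⬝ᵥ c2)) *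
            ∑ h : H1, ((f (c1 + h) - α1 : ℝ) : ℂ)
              * ep p ((r + (s : Fin n → ZMod p)) ⬝ᵥ (c1 + h)) := by
      intro s
      have hpt : ∀ x : Fin n → ZMod p,
          ep p ((s : Fin n → ZMod p) ⬝ᵥ (x - c2)) * (if x - c1 ∈ H1 then G x else 0)
          = ep p (-((s : Fin n → ZMod p) ⬝ᵥ c2)) *
              (if x - c1 ∈ H1 then
                ((f x - α1 : ℝ) : ℂ) * ep p ((r + (s : Fin n → ZMod p)) ⬝ᵥ x) else 0) := by
        intro x
        by_cases hx : x - c1 ∈ H1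
        · rw [if_pos hx, if_pos hx, hG]
          have e1 : (s : Fin n → ZMod p) ⬝ᵥ (x - c2)
              = -((s : Fin n → ZMod p) ⬝ᵥ c2) + (s : Fin n → ZMod p) ⬝ᵥ x := by
            rw [dotProduct_sub]; ring
          have e2 : (r + (s : Fin n → ZMod p)) ⬝ᵥ x
              = r ⬝ᵥ x + (s : Fin n → ZMod p) ⬝ᵥ x := add_dotProduct _ _ _
          rw [e1, ep_add, e2, ep_add]
          ring
        · rw [if_neg hx, if_neg hx, mul_zero, mul_zero]
      simp_rw [hpt]
      rw [← Finset.mul_sum]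
      congr 1
      exact (sum_coset H1 c1
        (fun x => ((f x - α1 : ℝ) : ℂ) * ep p ((r + (s : Fin n → ZMod p)) ⬝ᵥ x))).symm
    have step3 : ∑ h : H2, ((f (c2 + h) - α1 : ℝ) : ℂ) * ep p (r ⬝ᵥ (c2 + h))
        = (∑ s : dotAnn H2, ep p (-((s : Fin n → ZMod p) ⬝ᵥ c2)) *
            ∑ h : H1, ((f (c1 + h) - α1 : ℝ) : ℂ)
              * ep p ((r + (s : Fin n → ZMod p)) ⬝ᵥ (c1 + h))) / N := by
      rw [step1]
      simp_rw [step2]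
      rw [← Finset.sum_div, Finset.sum_comm]
      congr 1
      exact Finset.sum_congr rfl fun s _ => inner s
    rw [step3, norm_div]
    have hNnorm : ‖N‖ = (Fintype.card (dotAnn H2) : ℝ) := by
      rw [hN]; simp
    rw [hNnorm, div_le_iff₀ (by exact_mod_cast hAnnpos)]
    calc ‖∑ s : dotAnn H2, ep p (-((s : Fin n → ZMod p) ⬝ᵥ c2)) *
            ∑ h : H1, ((f (c1 + h) - α1 : ℝ) : ℂ)
              * ep p ((r + (s : Fin n → ZMod p)) ⬝ᵥ (c1 + h))‖
        ≤ ∑ s : dotAnn H2, ‖ep p (-((s : Fin n → ZMod p) ⬝ᵥ c2)) *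
            ∑ h : H1, ((f (c1 + h) - α1 : ℝ) : ℂ)
              * ep p ((r + (s : Fin n → ZMod p)) ⬝ᵥ (c1 + h))‖ := norm_sum_le _ _
      _ ≤ ∑ _s : dotAnn H2, ε * Fintype.card H1 := by
          refine Finset.sum_le_sum fun s _ => ?_
          rw [norm_mul, norm_ep, one_mul]
          exact hT _
      _ = ε * Fintype.card H1 * Fintype.card (dotAnn H2) := by
          rw [Finset.sum_const, Finset.card_univ, nsmul_eq_mul]
          ring
  -- sums of f - α2 over the H2 coset vanish
  have hzero : ∑ h : H2, ((f (c2 + h) - α2 : ℝ) : ℂ) = 0 := by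
    rw [← Complex.ofReal_sum]
    rw [show (0 : ℂ) = ((0 : ℝ) : ℂ) by simp]
    congr 1
    rw [Finset.sum_sub_distrib, Finset.sum_const, Finset.card_univ, nsmul_eq_mul, hα2,
      cosetAvg]
    field_simp
    ring
  -- part (ii): the averages
  have havg : |α2 - α1| ≤ (p : ℝ) ^ d * ε := by
    have h0 := main 0
    have heq : ∑ h : H2, ((f (c2 + h) - α1 : ℝ) : ℂ) * ep p ((0 : Fin n → ZMod p) ⬝ᵥ (c2 + h))
        = (((Fintype.card H2) * (α2 - α1) : ℝ) : ℂ) := by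
      simp_rw [zero_dotProduct, ep_zero, mul_one]
      rw [← Complex.ofReal_sum]
      congr 1
      rw [Finset.sum_sub_distrib, Finset.sum_const, Finset.card_univ, nsmul_eq_mul, hα2,
        cosetAvg]
      field_simp
    rw [heq, Complex.norm_real, Real.norm_eq_abs, abs_mul, Nat.abs_cast, hcards] at h0
    have hc2 : (0 : ℝ) < (Fintype.card H2 : ℝ) := by exact_mod_cast hcard2pos
    have h0' : (Fintype.card H2 : ℝ) * |α2 - α1|
        ≤ (Fintype.card H2 : ℝ) * ((p : ℝ) ^ d * ε) := by
      calc (Fintype.card H2 : ℝ) * |α2 - α1| ≤ ε * ((p : ℝ) ^ d * (Fintype.card H2 : ℝ)) := h0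
        _ = (Fintype.card H2 : ℝ) * ((p : ℝ) ^ d * ε) := by ring
    exact le_of_mul_le_mul_left h0' hc2
  refine ⟨?_, havg⟩
  -- part (i): regularity of the subcoset
  intro r
  by_cases hr : ∀ h ∈ H2, r ⬝ᵥ h = 0
  · -- the character is trivial on H2: the sum is exactly 0
    have hconst : ∑ h : H2, ((f (c2 + h) - α2 : ℝ) : ℂ) * ep p (r ⬝ᵥ (c2 + h))
        = ep p (r ⬝ᵥ c2) * ∑ h : H2, ((f (c2 + h) - α2 : ℝ) : ℂ) := by
      rw [Finset.mul_sum]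
      refine Finset.sum_congr rfl fun h _ => ?_
      rw [dotProduct_add, hr h h.2, add_zero]
      ring
    rw [hconst, hzero, mul_zero, zero_div, norm_zero]
    exact mul_nonneg (by positivity) hε
  · -- the character is nontrivial on H2
    push_neg at hr
    obtain ⟨h₀, hh₀, hr₀⟩ := hr
    set φlin : H2 →ₗ[ZMod p] ZMod p :=
      { toFun := fun h => r ⬝ᵥ (h : Fin n → ZMod p)
        map_add' := fun a b => by simp [dotProduct_add]
        map_smul' := fun c a => by simp [dotProduct_smul] } with hφlin
    have hφ : φlin ≠ 0 := by
      intro h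
      exact hr₀ (by simpa [hφlin] using congrFun (congrArg (fun ψ => ψ.toFun) h) ⟨h₀, hh₀⟩)
    have hWzero : ∑ h : H2, ep p (r ⬝ᵥ ((h : Fin n → ZMod p))) = 0 := by
      simpa [hφlin] using sum_ep_linear_eq_zero φlin hφ
    have hW : ∑ h : H2, ep p (r ⬝ᵥ (c2 + h)) = 0 := by
      have : ∀ h : H2, ep p (r ⬝ᵥ (c2 + (h : Fin n → ZMod p)))
          = ep p (r ⬝ᵥ c2) * ep p (r ⬝ᵥ (h : Fin n → ZMod p)) := by
        intro h
        rw [dotProduct_add, ep_add]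
      simp_rw [this]
      rw [← Finset.mul_sum, hWzero, mul_zero]
    have hsplit : ∑ h : H2, ((f (c2 + h) - α2 : ℝ) : ℂ) * ep p (r ⬝ᵥ (c2 + h))
        = ∑ h : H2, ((f (c2 + h) - α1 : ℝ) : ℂ) * ep p (r ⬝ᵥ (c2 + h))
          + ((α1 - α2 : ℝ) : ℂ) * ∑ h : H2, ep p (r ⬝ᵥ (c2 + h)) := by
      rw [Finset.mul_sum, ← Finset.sum_add_distrib]
      refine Finset.sum_congr rfl fun h _ => ?_
      push_cast
      ring
    rw [hsplit, hW, mul_zero, add_zero, norm_div]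
    have hc2 : (0 : ℝ) < (Fintype.card H2 : ℝ) := by exact_mod_cast hcard2pos
    have hcnorm : ‖((Fintype.card H2 : ℕ) : ℂ)‖ = (Fintype.card H2 : ℝ) := by simp
    rw [hcnorm, div_le_iff₀ hc2]
    calc ‖∑ h : H2, ((f (c2 + h) - α1 : ℝ) : ℂ) * ep p (r ⬝ᵥ (c2 + h))‖
        ≤ ε * Fintype.card H1 := main r
      _ = (p : ℝ) ^ d * ε * Fintype.card H2 := by rw [hcards]; ring
end

section
/- Fix ε > 0. There exists δ = δ(ε) > 0 such that for every subset A ⊆ F_p^n (n sufficiently large), at least one of the following holds: (i) |A| ≤ ε·p^n; (ii) |(A+A) ∩ A^c| > δ·p^n; (iii) there exists a subspace H ≤ F_p^n with |A Δ H| ≤ ε·p^n. -/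
open Pointwise

section Aux

variable {G : Type*} [AddCommGroup G] [DecidableEq G]

lemma aux_mem_vadd (A : Finset G) (x a : G) : a ∈ x +ᵥ A ↔ a - x ∈ A := by
  constructor
  · intro h
    obtain ⟨c, hc, rfl⟩ := Finset.mem_vadd_finset.mp h
    simpa using hc
  · intro h
    exact Finset.mem_vadd_finset.mpr ⟨a - x, h, by simp⟩

lemma aux_r_lower (A : Finset G) {x : G} (hx : x ∈ A - A) :
    2 * A.card ≤ (A ∩ (x +ᵥ A)).card + (A + A).card := by
  obtain ⟨a, ha, b, hb, rfl⟩ := Finset.mem_sub.mp hx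
  have hsub : (A ∪ ((a - b) +ᵥ A)).image (· + b) ⊆ A + A := by
    intro y hy
    obtain ⟨z, hz, rfl⟩ := Finset.mem_image.mp hy
    rcases Finset.mem_union.mp hz with h | h
    · exact Finset.add_mem_add h hb
    · have h' : z - (a - b) ∈ A := (aux_mem_vadd A _ z).mp h
      have : z + b = a + (z - (a - b)) := by abel
      rw [this]
      exact Finset.add_mem_add ha h'
  have h1 : (A ∪ ((a - b) +ᵥ A)).card ≤ (A + A).card := by
    rw [← Finset.card_image_of_injective (A ∪ ((a - b) +ᵥ A)) (add_left_injective b)]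
    exact Finset.card_le_card hsub
  have h2 := Finset.card_union_add_card_inter A ((a - b) +ᵥ A)
  have h3 : ((a - b) +ᵥ A).card = A.card := Finset.card_vadd_finset _ _
  omega

lemma aux_neg_mem {A : Finset G} {y : G} (hy : y ∈ A - A) : -y ∈ A - A := by
  obtain ⟨a, ha, b, hb, rfl⟩ := Finset.mem_sub.mp hy
  exact Finset.mem_sub.mpr ⟨b, hb, a, ha, by abel⟩

lemma aux_closed {A : Finset G}
    (hr : ∀ x ∈ A - A, A.card < 2 * (A ∩ (x +ᵥ A)).card) :
    ∀ x ∈ A - A, ∀ y ∈ A - A, x + y ∈ A - A := by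
  intro x hx y hy
  have hny : -y ∈ A - A := aux_neg_mem hy
  have h1 := hr x hx
  have h2 := hr (-y) hny
  have hne : ((A ∩ (x +ᵥ A)) ∩ (A ∩ ((-y) +ᵥ A))).Nonempty := by
    rw [Finset.nonempty_iff_ne_empty]
    intro hemp
    have hu : (A ∩ (x +ᵥ A)) ∪ (A ∩ ((-y) +ᵥ A)) ⊆ A := by
      intro z hz
      rcases Finset.mem_union.mp hz with h | h
      · exact (Finset.mem_inter.mp h).1
      · exact (Finset.mem_inter.mp h).1
    have hc := Finset.card_union_add_card_inter (A ∩ (x +ᵥ A)) (A ∩ ((-y) +ᵥ A))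
    have := Finset.card_le_card hu
    rw [hemp] at hc
    simp at hc
    omega
  obtain ⟨a, ha⟩ := hne
  rw [Finset.mem_inter, Finset.mem_inter, Finset.mem_inter] at ha
  obtain ⟨⟨ha1, ha2⟩, _, ha3⟩ := ha
  have hax : a - x ∈ A := (aux_mem_vadd A x a).mp ha2
  have hay : a + y ∈ A := by
    have := (aux_mem_vadd A (-y) a).mp ha3
    simpa [sub_neg_eq_add] using this
  exact Finset.mem_sub.mpr ⟨a + y, hay, a - x, hax, by abel⟩

lemma aux_card_sub (A : Finset G) {m : ℕ}
    (hr : ∀ x ∈ A - A, m ≤ (A ∩ (x +ᵥ A)).card) :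
    (A - A).card * m ≤ A.card * A.card := by
  have hmap : ∀ q ∈ A ×ˢ A, q.1 - q.2 ∈ A - A := by
    intro q hq
    rw [Finset.mem_product] at hq
    exact Finset.sub_mem_sub hq.1 hq.2
  have key : (A ×ˢ A).card =
      ∑ x ∈ A - A, ((A ×ˢ A).filter (fun q => q.1 - q.2 = x)).card :=
    Finset.card_eq_sum_card_fiberwise hmap
  have hf : ∀ x ∈ A - A, m ≤ ((A ×ˢ A).filter (fun q => q.1 - q.2 = x)).card := by
    intro x hx
    refine le_trans (hr x hx) (Finset.card_le_card_of_injOn (fun a => (a, a - x)) ?_ ?_)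
    · intro a ha
      rw [Finset.mem_coe, Finset.mem_inter] at ha
      have hax : a - x ∈ A := (aux_mem_vadd A x a).mp ha.2
      rw [Finset.mem_coe, Finset.mem_filter, Finset.mem_product]
      exact ⟨⟨ha.1, hax⟩, sub_sub_cancel a x⟩
    · intro a _ b _ h
      exact congrArg Prod.fst h
  calc (A - A).card * m = (A - A).card • m := by rw [smul_eq_mul]
    _ ≤ ∑ x ∈ A - A, ((A ×ˢ A).filter (fun q => q.1 - q.2 = x)).card :=
        Finset.card_nsmul_le_sum (A - A) _ m hf
    _ = (A ×ˢ A).card := key.symm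
    _ = A.card * A.card := Finset.card_product A A

end Aux

set_option maxHeartbeats 1000000 in
/-- for every `ε > 0` there is a `δ > 0` such that for every set
`A ⊆ F_p^n` (`n` sufficiently large), either `A` is small, or `(A+A) ∩ Aᶜ` is large, or
`A` is `ε`-close to a subspace. -/
theorem small_sumset_escape_implies_close_to_subspace {p : ℕ} [Fact p.Prime]
    (ε : ℝ) (hε : 0 < ε) :
    ∃ δ : ℝ, 0 < δ ∧ ∃ N : ℕ, ∀ n ≥ N, ∀ A : Set (Fin n → ZMod p),
      ((A.ncard : ℝ) ≤ ε * (p : ℝ) ^ n) ∨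
      ((((A + A) ∩ Aᶜ).ncard : ℝ) > δ * (p : ℝ) ^ n) ∨
      (∃ H : Submodule (ZMod p) (Fin n → ZMod p),
        ((symmDiff A (H : Set (Fin n → ZMod p))).ncard : ℝ) ≤ ε * (p : ℝ) ^ n) := by
  classical
  set ε₀ : ℝ := min ε (1/2) with hε₀def
  have hε₀pos : 0 < ε₀ := lt_min hε (by norm_num)
  have hε₀le : ε₀ ≤ ε := min_le_left _ _
  have hε₀half : ε₀ ≤ 1/2 := min_le_right _ _
  refine ⟨ε₀ ^ 2 / 2, by positivity, 0, fun n _ A => ?_⟩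
  set δ : ℝ := ε₀ ^ 2 / 2 with hδdef
  set q : ℝ := (p : ℝ) ^ n with hqdef
  have hp2 : 2 ≤ p := (Fact.out : p.Prime).two_le
  have hqpos : 0 < q := by positivity
  by_cases h1 : (A.ncard : ℝ) ≤ ε * q
  · exact Or.inl h1
  by_cases h2 : (((A + A) ∩ Aᶜ).ncard : ℝ) > δ * q
  · exact Or.inr (Or.inl h2)
  push_neg at h1 h2
  refine Or.inr (Or.inr ?_)
  -- move to finsets
  have hfinA : A.Finite := Set.toFinite A
  set F : Finset (Fin n → ZMod p) := hfinA.toFinset with hFdef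
  have hFcoe : (F : Set (Fin n → ZMod p)) = A := hfinA.coe_toFinset
  have hncardA : A.ncard = F.card := Set.ncard_eq_toFinset_card A hfinA
  have hsumcoe : ((F + F : Finset (Fin n → ZMod p)) : Set (Fin n → ZMod p)) = A + A := by
    rw [Finset.coe_add, hFcoe]
  have hdiffcoe : (((F + F) \ F : Finset (Fin n → ZMod p)) : Set (Fin n → ZMod p)) = (A + A) ∩ Aᶜ := by
    rw [Finset.coe_sdiff, hsumcoe, hFcoe, Set.diff_eq]
  set k : ℕ := ((F + F) \ F).card with hkdef
  have hkcard : ((A + A) ∩ Aᶜ).ncard = k := by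
    rw [← hdiffcoe, Set.ncard_coe_finset]
  have hk : (k : ℝ) ≤ δ * q := by rw [← hkcard]; exact h2
  have haF : ε * q < (F.card : ℝ) := by rw [hncardA] at h1; exact_mod_cast h1
  have hcardG : (Fintype.card (Fin n → ZMod p) : ℝ) = q := by
    rw [hqdef]
    have : Fintype.card (Fin n → ZMod p) = p ^ n := by
      simp [Fintype.card_fun, ZMod.card]
    rw [this]; push_cast; ring
  have hFle : (F.card : ℝ) ≤ q := by
    rw [← hcardG]; exact_mod_cast Finset.card_le_univ F
  -- sumset bound : (F+F).card ≤ F.card + k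
  have hsum_le : (F + F).card ≤ F.card + k := by
    have : F + F ⊆ F ∪ ((F + F) \ F) := by
      intro z hz
      by_cases hzF : z ∈ F
      · exact Finset.mem_union_left _ hzF
      · exact Finset.mem_union_right _ (Finset.mem_sdiff.mpr ⟨hz, hzF⟩)
    exact le_trans (Finset.card_le_card this) (Finset.card_union_le _ _)
  -- k is small compared to F.card
  have h2k : 2 * k < F.card := by
    have hδq : (2 : ℝ) * (δ * q) < ε * q := by
      have : 2 * δ = ε₀ ^ 2 := by rw [hδdef]; ring
      have h1 : ε₀ ^ 2 < ε₀ := by nlinarith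
      nlinarith
    have : ((2 * k : ℕ) : ℝ) < (F.card : ℝ) := by
      push_cast
      nlinarith
    exact_mod_cast this
  -- lower bound on intersections
  have hrlow : ∀ x ∈ F - F, F.card - k ≤ (F ∩ (x +ᵥ F)).card := by
    intro x hx
    have := aux_r_lower F hx
    omega
  have hrhalf : ∀ x ∈ F - F, F.card < 2 * (F ∩ (x +ᵥ F)).card := by
    intro x hx
    have := hrlow x hx
    omega
  have hclosed := aux_closed hrhalf
  have hcards := aux_card_sub F hrlow
  have hFne : F.Nonempty := Finset.card_pos.mp (by omega)
  obtain ⟨a₀, ha₀⟩ := hFne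
  -- the subgroup
  set Hg : AddSubgroup (Fin n → ZMod p) :=
    { carrier := (↑(F - F) : Set (Fin n → ZMod p))
      add_mem' := fun hx hy => hclosed _ hx _ hy
      zero_mem' := by
        have : (0 : Fin n → ZMod p) ∈ F - F := Finset.mem_sub.mpr ⟨a₀, ha₀, a₀, ha₀, by abel⟩
        exact this
      neg_mem' := fun hx => aux_neg_mem hx } with hHgdef
  have hHgmem : ∀ z : Fin n → ZMod p, z ∈ Hg ↔ z ∈ F - F := fun z => Iff.rfl
  -- A ∩ (A+A) nonempty
  have hzex : ∃ z, z ∈ F ∧ z ∈ F + F := by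
    by_contra h
    push_neg at h
    have hFsub : F + F ⊆ (F + F) \ F := by
      intro z hz
      exact Finset.mem_sdiff.mpr ⟨hz, fun hzF => h z hzF hz⟩
    have h1 : (F + F).card ≤ k := Finset.card_le_card hFsub
    have h2 : F.card ≤ (F + F).card := by
      have : a₀ +ᵥ F ⊆ F + F := by
        intro z hz
        obtain ⟨c, hc, rfl⟩ := Finset.mem_vadd_finset.mp hz
        exact Finset.add_mem_add ha₀ hc
      calc F.card = (a₀ +ᵥ F).card := (Finset.card_vadd_finset _ _).symm
        _ ≤ (F + F).card := Finset.card_le_card this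
    omega
  obtain ⟨z, hzF, hzFF⟩ := hzex
  obtain ⟨u, hu, v, hv, rfl⟩ := Finset.mem_add.mp hzFF
  have ha₀H : a₀ ∈ Hg := by
    have h1 : u + v - a₀ ∈ Hg := Finset.mem_sub.mpr ⟨u + v, hzF, a₀, ha₀, rfl⟩
    have h2 : u - a₀ ∈ Hg := Finset.mem_sub.mpr ⟨u, hu, a₀, ha₀, rfl⟩
    have h3 : v - a₀ ∈ Hg := Finset.mem_sub.mpr ⟨v, hv, a₀, ha₀, rfl⟩
    have : (u + v - a₀) - ((u - a₀) + (v - a₀)) = a₀ := by abel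
    exact this ▸ sub_mem h1 (add_mem h2 h3)
  have hFsubH : F ⊆ F - F := by
    intro a ha
    have h1 : a - a₀ ∈ Hg := Finset.mem_sub.mpr ⟨a, ha, a₀, ha₀, rfl⟩
    have : (a - a₀) + a₀ = a := by abel
    have h2 : (a - a₀) + a₀ ∈ Hg := add_mem h1 ha₀H
    rw [this] at h2
    exact h2
  -- the submodule
  refine ⟨AddSubgroup.toZModSubmodule p Hg, ?_⟩
  have hHcoe : ((AddSubgroup.toZModSubmodule p Hg : Submodule (ZMod p) (Fin n → ZMod p)) : Set (Fin n → ZMod p))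
      = (↑(F - F) : Set (Fin n → ZMod p)) := rfl
  rw [hHcoe]
  have hAsub : A ⊆ (↑(F - F) : Set (Fin n → ZMod p)) := by
    rw [← hFcoe]
    exact_mod_cast hFsubH
  have hsymm : symmDiff A (↑(F - F) : Set (Fin n → ZMod p)) = (↑(F - F) : Set (Fin n → ZMod p)) \ A :=
    symmDiff_of_le hAsub
  rw [hsymm]
  have hdiff : ((↑(F - F) : Set (Fin n → ZMod p)) \ A).ncard = (F - F).card - F.card := by
    rw [← hFcoe, ← Finset.coe_sdiff, Set.ncard_coe_finset, Finset.card_sdiff_of_subset hFsubH]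
  rw [hdiff]
  -- final numeric bound
  have hFleD : F.card ≤ (F - F).card := Finset.card_le_card hFsubH
  have hcast : (((F - F).card - F.card : ℕ) : ℝ) = ((F - F).card : ℝ) - (F.card : ℝ) := by
    push_cast [Nat.cast_sub hFleD]; ring
  rw [hcast]
  set D : ℝ := ((F - F).card : ℝ) with hDdef
  set a : ℝ := (F.card : ℝ) with hadef
  have hm : (((F.card - k : ℕ)) : ℝ) = a - (k : ℝ) := by
    have : k ≤ F.card := by omega
    push_cast [Nat.cast_sub this]; ring
  have hcardsR : D * (a - (k : ℝ)) ≤ a * a := by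
    have := hcards
    have hcast2 : ((F - F).card : ℝ) * (((F.card - k : ℕ)) : ℝ) ≤ (F.card : ℝ) * (F.card : ℝ) := by
      exact_mod_cast this
    rw [hm] at hcast2
    exact hcast2
  have hε₀q : ε₀ * q < a := lt_of_le_of_lt (by nlinarith) haF
  have hak : (3/4) * ε₀ * q ≤ a - (k : ℝ) := by
    have : (k : ℝ) ≤ (ε₀ ^ 2 / 2) * q := hk
    nlinarith
  have hDa : (D - a) * (a - (k : ℝ)) ≤ a * (k : ℝ) := by nlinarith
  have hgoal : D - a ≤ ε * q := by
    by_contra hcon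
    push_neg at hcon
    have h1 : ε₀ * q < D - a := lt_of_le_of_lt (by nlinarith) hcon
    have h2 : (ε₀ * q) * ((3/4) * ε₀ * q) ≤ (D - a) * (a - (k : ℝ)) := by
      apply mul_le_mul (le_of_lt h1) hak (by nlinarith) (by nlinarith)
    have h3 : a * (k : ℝ) ≤ q * ((ε₀ ^ 2 / 2) * q) := by
      have hk0 : (0 : ℝ) ≤ (k : ℝ) := Nat.cast_nonneg k
      calc a * (k : ℝ) ≤ q * (k : ℝ) := by nlinarith
        _ ≤ q * ((ε₀ ^ 2 / 2) * q) := by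
            have : (k : ℝ) ≤ (ε₀ ^ 2 / 2) * q := hk
            nlinarith
    have hpos : 0 < ε₀ * q * (ε₀ * q) := mul_pos (mul_pos hε₀pos hqpos) (mul_pos hε₀pos hqpos)
    linarith [hpos, h2, hDa, h3]
  linarith
end

section
/- Fix ε > 0, r ≥ 1, δ > 0, and an l×m partition-regular matrix A over F_p. For all sufficiently large n and any functions f_1,...,f_r : F_p^n → [0,1], there exist a subspace H ≤ F_p^n of bounded codimension and elements z_1,...,z_m ∈ F_p^n such that: (i) A(z_1,...,z_m)^T = 0; (ii) each coset H+z_j is ε-regular for all f_1,...,f_r; (iii) for each i ∈ [r], either E_{x∈H+z_j} f_i(x) < δ for all j ∈ [m], or E_{x∈H+z_j} f_i(x) ≥ δ for all j ∈ [m]. -/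
open Matrix
open scoped Classical

/-- An `l × m` matrix `A` over `F_p` is partition-regular: for every number of colours `r`
there is `N` such that for all `n ≥ N`, every `r`-colouring of `F_p^n` admits a
monochromatic solution to `Ax = 0` lying in `F_p^n \ {0}`. -/
def PartitionRegular (p l m : ℕ) (A : Matrix (Fin l) (Fin m) (ZMod p)) : Prop :=
  ∀ r : ℕ, 0 < r → ∃ N : ℕ, ∀ n ≥ N, ∀ χ : (Fin n → ZMod p) → Fin r,
    ∃ x : Fin m → (Fin n → ZMod p),
      (∀ i, ∑ j : Fin m, A i j • x j = 0) ∧ (∀ j, x j ≠ 0) ∧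
      ∀ j j', χ (x j) = χ (x j')

namespace SelectAux

variable {p n : ℕ} [Fact p.Prime]

/-- The (unnormalised) irregularity sum appearing in `epsRegular`. -/
noncomputable def sIrr (H : Submodule (ZMod p) (Fin n → ZMod p)) (c : Fin n → ZMod p)
    (f : (Fin n → ZMod p) → ℝ) (rr : Fin n → ZMod p) : ℂ :=
  ∑ h : H, ((f (c + h) - cosetAvg H c f : ℝ) : ℂ) * ep p (rr ⬝ᵥ (c + h))

/-- Summing a function of `h` over a subgroup is shift invariant. -/
theorem sum_shift {M : Type*} [AddCommMonoid M] (H : Submodule (ZMod p) (Fin n → ZMod p))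
    (h₀ : Fin n → ZMod p) (hh₀ : h₀ ∈ H) (F : (Fin n → ZMod p) → M) :
    ∑ h : H, F (h₀ + h) = ∑ h : H, F h := by
  refine Fintype.sum_equiv (Equiv.addLeft (⟨h₀, hh₀⟩ : H)) _ _ (fun h => ?_)
  simp

theorem cosetAvg_shift (H : Submodule (ZMod p) (Fin n → ZMod p)) (c h₀ : Fin n → ZMod p)
    (hh₀ : h₀ ∈ H) (f : (Fin n → ZMod p) → ℝ) :
    cosetAvg H (c + h₀) f = cosetAvg H c f := by
  unfold cosetAvg
  congr 1
  calc ∑ h : H, f (c + h₀ + h) = ∑ h : H, (fun v => f (c + v)) (h₀ + h) := by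
        refine Finset.sum_congr rfl fun h _ => ?_
        simp [add_assoc]
    _ = ∑ h : H, f (c + h) := sum_shift H h₀ hh₀ (fun v => f (c + v))

theorem sIrr_shift (H : Submodule (ZMod p) (Fin n → ZMod p)) (c h₀ : Fin n → ZMod p)
    (hh₀ : h₀ ∈ H) (f : (Fin n → ZMod p) → ℝ) (rr : Fin n → ZMod p) :
    sIrr H (c + h₀) f rr = sIrr H c f rr := by
  unfold sIrr
  rw [cosetAvg_shift H c h₀ hh₀ f]
  calc ∑ h : H, ((f (c + h₀ + h) - cosetAvg H c f : ℝ) : ℂ) * ep p (rr ⬝ᵥ (c + h₀ + h))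
      = ∑ h : H, (fun v => ((f (c + v) - cosetAvg H c f : ℝ) : ℂ) * ep p (rr ⬝ᵥ (c + v)))
          (h₀ + h) := by
        refine Finset.sum_congr rfl fun h _ => ?_
        simp [add_assoc]
    _ = _ := sum_shift H h₀ hh₀
          (fun v => ((f (c + v) - cosetAvg H c f : ℝ) : ℂ) * ep p (rr ⬝ᵥ (c + v)))

theorem card_subpos (H : Submodule (ZMod p) (Fin n → ZMod p)) :
    (0:ℝ) < (Fintype.card H : ℝ) := by
  have : 0 < Fintype.card H := Fintype.card_pos_iff.mpr ⟨0⟩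
  exact_mod_cast this

theorem cosetAvg_nonneg (H : Submodule (ZMod p) (Fin n → ZMod p)) (c : Fin n → ZMod p)
    {f : (Fin n → ZMod p) → ℝ} (hf : ∀ x, f x ∈ Set.Icc (0:ℝ) 1) :
    0 ≤ cosetAvg H c f := by
  unfold cosetAvg
  have : (0:ℝ) ≤ ∑ h : H, f (c + h) := Finset.sum_nonneg fun h _ => (hf _).1
  positivity

theorem cosetAvg_le_one (H : Submodule (ZMod p) (Fin n → ZMod p)) (c : Fin n → ZMod p)
    {f : (Fin n → ZMod p) → ℝ} (hf : ∀ x, f x ∈ Set.Icc (0:ℝ) 1) :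
    cosetAvg H c f ≤ 1 := by
  unfold cosetAvg
  rw [div_le_one (card_subpos H)]
  calc ∑ h : H, f (c + h) ≤ ∑ _h : H, (1:ℝ) :=
        Finset.sum_le_sum fun h _ => (hf _).2
    _ = (Fintype.card H : ℝ) := by simp

/-- Sum over the big subgroup of subcoset averages. -/
theorem sum_cosetAvg_sub (H H' : Submodule (ZMod p) (Fin n → ZMod p)) (hle : H' ≤ H)
    (c : Fin n → ZMod p) (f : (Fin n → ZMod p) → ℝ) :
    ∑ h : H, cosetAvg H' (c + h) f = (Fintype.card H : ℝ) * cosetAvg H c f := by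
  have key : ∑ h : H, ∑ h' : H', f (c + h + h')
      = (Fintype.card H' : ℝ) * ∑ h : H, f (c + h) := by
    rw [Finset.sum_comm]
    have hper : ∀ h' : H', ∑ h : H, f (c + h + h') = ∑ h : H, f (c + h) := by
      intro h'
      calc ∑ h : H, f (c + h + h')
          = ∑ h : H, (fun v => f (c + v)) ((h' : Fin n → ZMod p) + h) := by
            refine Finset.sum_congr rfl fun h _ => ?_
            have : c + h + h' = c + ((h' : Fin n → ZMod p) + h) := by
              simp only [add_assoc, add_comm (h : Fin n → ZMod p)]
            rw [this]
        _ = ∑ h : H, f (c + h) := sum_shift H _ (hle h'.2) (fun v => f (c + v))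
    calc ∑ h' : H', ∑ h : H, f (c + h + h') = ∑ _h' : H', ∑ h : H, f (c + h) :=
          Finset.sum_congr rfl fun h' _ => hper h'
      _ = (Fintype.card H' : ℝ) * ∑ h : H, f (c + h) := by
          rw [Finset.sum_const, nsmul_eq_mul, Finset.card_univ]
  unfold cosetAvg
  rw [← Finset.sum_div, key]
  field_simp

theorem norm_ep (t : ZMod p) : ‖ep p t‖ = 1 := by
  have : (2 * Real.pi * Complex.I * t.val / p)
      = ((2 * Real.pi * t.val / p : ℝ) : ℂ) * Complex.I := by
    push_cast
    ring
  rw [ep, this, Complex.norm_exp_ofReal_mul_I]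

/-- Grouping the irregularity sum along subcosets of `H'`. -/
theorem sIrr_group (H H' : Submodule (ZMod p) (Fin n → ZMod p)) (hle : H' ≤ H)
    (c : Fin n → ZMod p) (f : (Fin n → ZMod p) → ℝ) (rr : Fin n → ZMod p)
    (hker : ∀ h' : H', rr ⬝ᵥ (h' : Fin n → ZMod p) = 0) :
    sIrr H c f rr
      = ∑ h : H, ((cosetAvg H' (c + h) f - cosetAvg H c f : ℝ) : ℂ) * ep p (rr ⬝ᵥ (c + h)) := by
  have hcH' : (Fintype.card H' : ℂ) ≠ 0 := by
    exact_mod_cast (Fintype.card_pos_iff.mpr ⟨(0 : H')⟩).ne'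
  apply mul_left_cancel₀ hcH'
  have step1 : ∀ h' : H', sIrr H c f rr
      = ∑ h : H, (fun v => ((f (c + v) - cosetAvg H c f : ℝ) : ℂ) * ep p (rr ⬝ᵥ (c + v)))
          ((h' : Fin n → ZMod p) + h) := by
    intro h'
    exact (sum_shift H _ (hle h'.2)
      (fun v => ((f (c + v) - cosetAvg H c f : ℝ) : ℂ) * ep p (rr ⬝ᵥ (c + v)))).symm
  have inner : ∀ h : H,
      (∑ h' : H', ((f (c + (h + h')) - cosetAvg H c f : ℝ) : ℂ) * ep p (rr ⬝ᵥ (c + (h + h'))))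
      = (Fintype.card H' : ℂ) *
        (((cosetAvg H' (c + h) f - cosetAvg H c f : ℝ) : ℂ) * ep p (rr ⬝ᵥ (c + h))) := by
    intro h
    have harg : ∀ h' : H', (rr ⬝ᵥ (c + ((h : Fin n → ZMod p) + h'))) = rr ⬝ᵥ (c + h) := by
      intro h'
      have : c + ((h : Fin n → ZMod p) + h') = (c + h) + h' := by rw [add_assoc]
      rw [this, dotProduct_add, hker h', add_zero]
    have hsub : ∀ h' : H', (c : Fin n → ZMod p) + ((h : Fin n → ZMod p) + h') = (c + h) + h' := by
      intro h'; rw [add_assoc]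
    calc ∑ h' : H', ((f (c + (h + h')) - cosetAvg H c f : ℝ) : ℂ) * ep p (rr ⬝ᵥ (c + (h + h')))
        = ∑ h' : H', ((f ((c + h) + h') - cosetAvg H c f : ℝ) : ℂ) * ep p (rr ⬝ᵥ (c + h)) := by
          refine Finset.sum_congr rfl fun h' _ => ?_
          rw [harg h', hsub h']
      _ = (∑ h' : H', ((f ((c + h) + h') - cosetAvg H c f : ℝ) : ℂ)) * ep p (rr ⬝ᵥ (c + h)) := by
          rw [← Finset.sum_mul]
      _ = (((Fintype.card H' : ℝ) * (cosetAvg H' (c + h) f - cosetAvg H c f) : ℝ) : ℂ)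
            * ep p (rr ⬝ᵥ (c + h)) := by
          congr 1
          rw [← Complex.ofReal_sum]
          congr 1
          rw [Finset.sum_sub_distrib, Finset.sum_const, Finset.card_univ, nsmul_eq_mul]
          have : cosetAvg H' (c + (h : Fin n → ZMod p)) f
              = (∑ h' : H', f ((c + h) + h')) / (Fintype.card H') := rfl
          rw [this]
          field_simp
      _ = (Fintype.card H' : ℂ) *
            (((cosetAvg H' (c + h) f - cosetAvg H c f : ℝ) : ℂ) * ep p (rr ⬝ᵥ (c + h))) := by
          push_cast
          ring
  calc (Fintype.card H' : ℂ) * sIrr H c f rr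
      = ∑ _h' : H', sIrr H c f rr := by
        rw [Finset.sum_const, Finset.card_univ, nsmul_eq_mul]
    _ = ∑ h' : H', ∑ h : H,
          (fun v => ((f (c + v) - cosetAvg H c f : ℝ) : ℂ) * ep p (rr ⬝ᵥ (c + v)))
            ((h' : Fin n → ZMod p) + h) := Finset.sum_congr rfl fun h' _ => step1 h'
    _ = ∑ h : H, ∑ h' : H',
          ((f (c + (h + h')) - cosetAvg H c f : ℝ) : ℂ) * ep p (rr ⬝ᵥ (c + (h + h'))) := by
        rw [Finset.sum_comm]
        refine Finset.sum_congr rfl fun h _ => Finset.sum_congr rfl fun h' _ => ?_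
        have : (h' : Fin n → ZMod p) + h = (h : Fin n → ZMod p) + h' := add_comm _ _
        simp only [this, Submodule.coe_add]
    _ = ∑ h : H, (Fintype.card H' : ℂ) *
          (((cosetAvg H' (c + h) f - cosetAvg H c f : ℝ) : ℂ) * ep p (rr ⬝ᵥ (c + h))) :=
        Finset.sum_congr rfl fun h _ => inner h
    _ = (Fintype.card H' : ℂ) *
          ∑ h : H, ((cosetAvg H' (c + h) f - cosetAvg H c f : ℝ) : ℂ) * ep p (rr ⬝ᵥ (c + h)) := by
        rw [Finset.mul_sum]

/-- Cauchy–Schwarz / Jensen step, no gain. -/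
theorem sq_avg_le (H H' : Submodule (ZMod p) (Fin n → ZMod p)) (hle : H' ≤ H)
    (c : Fin n → ZMod p) (f : (Fin n → ZMod p) → ℝ) :
    (Fintype.card H : ℝ) * (cosetAvg H c f)^2 ≤ ∑ h : H, (cosetAvg H' (c + h) f)^2 := by
  have hc := card_subpos H
  have hsum := sum_cosetAvg_sub H H' hle c f
  have hcs := Finset.sum_mul_sq_le_sq_mul_sq Finset.univ
    (fun h : H => cosetAvg H' (c + h) f) (fun _ => (1:ℝ))
  simp only [mul_one, one_pow, Finset.sum_const, Finset.card_univ, nsmul_eq_mul] at hcs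
  rw [hsum] at hcs
  nlinarith [hcs, hc]

/-- Energy gain on an irregular coset. -/
theorem sq_avg_gain (H H' : Submodule (ZMod p) (Fin n → ZMod p)) (hle : H' ≤ H)
    (c : Fin n → ZMod p) (f : (Fin n → ZMod p) → ℝ) (rr : Fin n → ZMod p)
    (hker : ∀ h' : H', rr ⬝ᵥ (h' : Fin n → ZMod p) = 0)
    {ε : ℝ} (hε : 0 < ε)
    (hbad : ε * (Fintype.card H : ℝ) < ‖sIrr H c f rr‖) :
    (Fintype.card H : ℝ) * (cosetAvg H c f)^2 + (Fintype.card H : ℝ) * ε^2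
      ≤ ∑ h : H, (cosetAvg H' (c + h) f)^2 := by
  have hc := card_subpos H
  have hsum := sum_cosetAvg_sub H H' hle c f
  have hd0 : ∑ h : H, (cosetAvg H' (c + h) f - cosetAvg H c f) = 0 := by
    rw [Finset.sum_sub_distrib, Finset.sum_const, Finset.card_univ, nsmul_eq_mul, hsum, sub_self]
  have hnorm : ‖sIrr H c f rr‖ ≤ ∑ h : H, |cosetAvg H' (c + h) f - cosetAvg H c f| := by
    rw [sIrr_group H H' hle c f rr hker]
    refine le_trans (norm_sum_le _ _) (le_of_eq (Finset.sum_congr rfl fun h _ => ?_))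
    rw [norm_mul, norm_ep, mul_one, Complex.norm_real, Real.norm_eq_abs]
  have habs : ε * (Fintype.card H : ℝ)
      < ∑ h : H, |cosetAvg H' (c + h) f - cosetAvg H c f| := lt_of_lt_of_le hbad hnorm
  have hcs : (∑ h : H, |cosetAvg H' (c + h) f - cosetAvg H c f|)^2
      ≤ (∑ h : H, (cosetAvg H' (c + h) f - cosetAvg H c f)^2) * (Fintype.card H : ℝ) := by
    have h' := Finset.sum_mul_sq_le_sq_mul_sq Finset.univ
      (fun h : H => |cosetAvg H' (c + h) f - cosetAvg H c f|) (fun _ => (1:ℝ))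
    simpa [mul_one, one_pow, Finset.sum_const, Finset.card_univ, nsmul_eq_mul, sq_abs] using h'
  have hdsq : (Fintype.card H : ℝ) * ε^2
      ≤ ∑ h : H, (cosetAvg H' (c + h) f - cosetAvg H c f)^2 := by
    have h1 : (ε * (Fintype.card H : ℝ))^2
        < (∑ h : H, |cosetAvg H' (c + h) f - cosetAvg H c f|)^2 := by
      have hεk : 0 ≤ ε * (Fintype.card H : ℝ) := by positivity
      exact pow_lt_pow_left₀ habs hεk (by norm_num)
    nlinarith [h1, hcs, hc]
  have hexp : ∑ h : H, (cosetAvg H' (c + h) f)^2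
      = (∑ h : H, (cosetAvg H' (c + h) f - cosetAvg H c f)^2)
        + 2 * cosetAvg H c f * (∑ h : H, (cosetAvg H' (c + h) f - cosetAvg H c f))
        + (Fintype.card H : ℝ) * (cosetAvg H c f)^2 := by
    have hpt : ∀ h : H, (cosetAvg H' (c + h) f)^2
        = (cosetAvg H' (c + h) f - cosetAvg H c f)^2
          + 2 * cosetAvg H c f * (cosetAvg H' (c + h) f - cosetAvg H c f)
          + (cosetAvg H c f)^2 := fun h => by ring
    rw [Finset.sum_congr rfl fun h _ => hpt h, Finset.sum_add_distrib, Finset.sum_add_distrib,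
        ← Finset.mul_sum, Finset.sum_const, Finset.card_univ, nsmul_eq_mul]
  rw [hexp, hd0]
  linarith [hdsq]

/-- Shift invariance of sums over the whole group. -/
theorem sum_shift_glob {M : Type*} [AddCommMonoid M] (c : Fin n → ZMod p)
    (F : (Fin n → ZMod p) → M) :
    ∑ x : Fin n → ZMod p, F (x + c) = ∑ x : Fin n → ZMod p, F x :=
  Fintype.sum_equiv (Equiv.addRight c) _ _ (fun _ => rfl)

/-- The bad set of an `r`-tuple of functions: points whose coset is irregular
for some colour. -/
noncomputable def BadSet {r : ℕ} (ε : ℝ) (H : Submodule (ZMod p) (Fin n → ZMod p))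
    (f : Fin r → (Fin n → ZMod p) → ℝ) : Finset (Fin n → ZMod p) :=
  Finset.univ.filter (fun v => ¬ ∀ i, epsRegular ε H v (f i))

/-- The `L²` energy of the coset averages. -/
noncomputable def energy {r : ℕ} (H : Submodule (ZMod p) (Fin n → ZMod p))
    (f : Fin r → (Fin n → ZMod p) → ℝ) : ℝ :=
  ∑ x : Fin n → ZMod p, ∑ i, (cosetAvg H x (f i))^2

theorem energy_nonneg {r : ℕ} (H : Submodule (ZMod p) (Fin n → ZMod p))
    (f : Fin r → (Fin n → ZMod p) → ℝ) : 0 ≤ energy H f :=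
  Finset.sum_nonneg fun _ _ => Finset.sum_nonneg fun _ _ => sq_nonneg _

theorem energy_le {r : ℕ} (H : Submodule (ZMod p) (Fin n → ZMod p))
    {f : Fin r → (Fin n → ZMod p) → ℝ} (hf : ∀ i x, f i x ∈ Set.Icc (0:ℝ) 1) :
    energy H f ≤ (r : ℝ) * (Fintype.card (Fin n → ZMod p) : ℝ) := by
  unfold energy
  calc ∑ x : Fin n → ZMod p, ∑ i, (cosetAvg H x (f i))^2
      ≤ ∑ _x : Fin n → ZMod p, (r:ℝ) := by
        refine Finset.sum_le_sum fun x _ => ?_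
        calc ∑ i, (cosetAvg H x (f i))^2 ≤ ∑ _i : Fin r, (1:ℝ) := by
              refine Finset.sum_le_sum fun i _ => ?_
              have h1 := cosetAvg_nonneg H x (hf i)
              have h2 := cosetAvg_le_one H x (hf i)
              nlinarith
          _ = (r:ℝ) := by simp
    _ = (r:ℝ) * (Fintype.card (Fin n → ZMod p) : ℝ) := by
        rw [Finset.sum_const, Finset.card_univ, nsmul_eq_mul]
        ring

/-- The energy increment step. -/
theorem energy_gain {r : ℕ} (H H' : Submodule (ZMod p) (Fin n → ZMod p)) (hle : H' ≤ H)
    (f : Fin r → (Fin n → ZMod p) → ℝ) {ε : ℝ} (hε : 0 < ε)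
    (hwit : ∀ x ∈ BadSet ε H f, ∃ (i : Fin r) (rr : Fin n → ZMod p),
      (∀ h' : H', rr ⬝ᵥ (h' : Fin n → ZMod p) = 0) ∧
      ε * (Fintype.card H : ℝ) < ‖sIrr H x (f i) rr‖) :
    energy H f + ((BadSet ε H f).card : ℝ) * ε^2 ≤ energy H' f := by
  have hk := card_subpos H
  have hA : (Fintype.card H : ℝ) * energy H' f
      = ∑ x : Fin n → ZMod p, ∑ i, ∑ h : H, (cosetAvg H' (x + h) (f i))^2 := by
    calc (Fintype.card H : ℝ) * energy H' f = ∑ _h : H, energy H' f := by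
          rw [Finset.sum_const, Finset.card_univ, nsmul_eq_mul]
      _ = ∑ h : H, ∑ x : Fin n → ZMod p, ∑ i, (cosetAvg H' (x + h) (f i))^2 := by
          refine Finset.sum_congr rfl fun h _ => ?_
          exact (sum_shift_glob (h : Fin n → ZMod p)
            (fun v => ∑ i, (cosetAvg H' v (f i))^2)).symm
      _ = ∑ x : Fin n → ZMod p, ∑ h : H, ∑ i, (cosetAvg H' (x + h) (f i))^2 :=
          Finset.sum_comm
      _ = ∑ x : Fin n → ZMod p, ∑ i, ∑ h : H, (cosetAvg H' (x + h) (f i))^2 :=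
          Finset.sum_congr rfl fun x _ => Finset.sum_comm
  have hB : ∀ x : Fin n → ZMod p,
      (∑ i, (Fintype.card H : ℝ) * (cosetAvg H x (f i))^2)
        + (if x ∈ BadSet ε H f then (Fintype.card H : ℝ) * ε^2 else 0)
      ≤ ∑ i, ∑ h : H, (cosetAvg H' (x + h) (f i))^2 := by
    intro x
    by_cases hx : x ∈ BadSet ε H f
    · obtain ⟨i₀, rr, hker, hbig⟩ := hwit x hx
      rw [if_pos hx]
      have key : ∀ i, (Fintype.card H : ℝ) * (cosetAvg H x (f i))^2
          + (if i = i₀ then (Fintype.card H : ℝ) * ε^2 else 0)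
          ≤ ∑ h : H, (cosetAvg H' (x + h) (f i))^2 := by
        intro i
        by_cases hi : i = i₀
        · subst hi
          rw [if_pos rfl]
          exact sq_avg_gain H H' hle x (f i) rr hker hε hbig
        · rw [if_neg hi, add_zero]
          exact sq_avg_le H H' hle x (f i)
      calc (∑ i, (Fintype.card H : ℝ) * (cosetAvg H x (f i))^2)
            + (Fintype.card H : ℝ) * ε^2
          = ∑ i, ((Fintype.card H : ℝ) * (cosetAvg H x (f i))^2
              + (if i = i₀ then (Fintype.card H : ℝ) * ε^2 else 0)) := by
            rw [Finset.sum_add_distrib]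
            congr 1
            rw [Finset.sum_ite_eq' Finset.univ i₀
              (fun _ => (Fintype.card H : ℝ) * ε^2)]
            simp
        _ ≤ ∑ i, ∑ h : H, (cosetAvg H' (x + h) (f i))^2 :=
            Finset.sum_le_sum fun i _ => key i
    · rw [if_neg hx, add_zero]
      exact Finset.sum_le_sum fun i _ => sq_avg_le H H' hle x (f i)
  have hsum := Finset.sum_le_sum (fun x (_ : x ∈ (Finset.univ : Finset (Fin n → ZMod p))) => hB x)
  rw [← hA] at hsum
  have hL : ∑ x : Fin n → ZMod p,
      ((∑ i, (Fintype.card H : ℝ) * (cosetAvg H x (f i))^2)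
        + (if x ∈ BadSet ε H f then (Fintype.card H : ℝ) * ε^2 else 0))
      = (Fintype.card H : ℝ) * energy H f
        + ((BadSet ε H f).card : ℝ) * ((Fintype.card H : ℝ) * ε^2) := by
    rw [Finset.sum_add_distrib]
    congr 1
    · unfold energy
      rw [Finset.mul_sum]
      exact Finset.sum_congr rfl fun x _ => by rw [Finset.mul_sum]
    · rw [Finset.sum_ite_mem, Finset.univ_inter, Finset.sum_const, nsmul_eq_mul]
  rw [hL] at hsum
  nlinarith [hsum, hk]

/-- The linear functional `v ↦ rr ⬝ᵥ v`. -/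
noncomputable def dpL (rr : Fin n → ZMod p) : (Fin n → ZMod p) →ₗ[ZMod p] ZMod p where
  toFun v := rr ⬝ᵥ v
  map_add' u v := by simp [dotProduct_add]
  map_smul' c v := by simp [dotProduct_smul, smul_eq_mul]

theorem finrank_inf_ker (M : Submodule (ZMod p) (Fin n → ZMod p))
    (g : (Fin n → ZMod p) →ₗ[ZMod p] ZMod p) :
    Module.finrank (ZMod p) M
      ≤ Module.finrank (ZMod p) (M ⊓ LinearMap.ker g : Submodule (ZMod p) (Fin n → ZMod p)) + 1 := by
  have h1 := LinearMap.finrank_range_add_finrank_ker (g.comp M.subtype)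
  have h2 : LinearMap.ker (g.comp M.subtype)
      = Submodule.comap M.subtype (M ⊓ LinearMap.ker g : Submodule (ZMod p) (Fin n → ZMod p)) := by
    rw [LinearMap.ker_comp]
    ext x
    simp [x.2]
  have h3 : Module.finrank (ZMod p) (LinearMap.ker (g.comp M.subtype))
      = Module.finrank (ZMod p) (M ⊓ LinearMap.ker g : Submodule (ZMod p) (Fin n → ZMod p)) := by
    rw [h2]
    exact (Submodule.comapSubtypeEquivOfLe inf_le_left).finrank_eq
  have h4 : Module.finrank (ZMod p) (LinearMap.range (g.comp M.subtype)) ≤ 1 := by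
    have := Submodule.finrank_le (LinearMap.range (g.comp M.subtype))
    simpa using this
  omega

theorem finrank_inf_kers {α : Type*} (M : Submodule (ZMod p) (Fin n → ZMod p))
    (s : Finset α) (g : α → ((Fin n → ZMod p) →ₗ[ZMod p] ZMod p)) :
    Module.finrank (ZMod p) M
      ≤ Module.finrank (ZMod p)
          (M ⊓ s.inf (fun a => LinearMap.ker (g a)) : Submodule (ZMod p) (Fin n → ZMod p))
        + s.card := by
  classical
  induction s using Finset.induction with
  | empty =>
    rw [Finset.inf_empty, inf_top_eq, Finset.card_empty]
    omega
  | @insert a s ha ih =>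
    rw [Finset.inf_insert, Finset.card_insert_of_notMem ha]
    have hEq : (M ⊓ (LinearMap.ker (g a) ⊓ s.inf fun a => LinearMap.ker (g a))
          : Submodule (ZMod p) (Fin n → ZMod p))
        = ((M ⊓ s.inf fun a => LinearMap.ker (g a)) ⊓ LinearMap.ker (g a)
          : Submodule (ZMod p) (Fin n → ZMod p)) := by
      rw [inf_comm (LinearMap.ker (g a)) (s.inf fun a => LinearMap.ker (g a)), ← inf_assoc]
    rw [hEq]
    have hstep := finrank_inf_ker (M ⊓ s.inf fun a => LinearMap.ker (g a)) (g a)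
    omega

theorem card_quot_le (H : Submodule (ZMod p) (Fin n → ZMod p)) {c : ℕ}
    (hc : n ≤ Module.finrank (ZMod p) H + c) :
    Fintype.card ((Fin n → ZMod p) ⧸ H) ≤ p ^ c := by
  have hp : 0 < p := (Fact.out : p.Prime).pos
  have hrank : Module.finrank (ZMod p) ((Fin n → ZMod p) ⧸ H) + Module.finrank (ZMod p) H
      = n := by
    rw [Submodule.finrank_quotient_add_finrank]
    simp [Module.finrank_pi]
  have hcard : Fintype.card ((Fin n → ZMod p) ⧸ H)
      = p ^ Module.finrank (ZMod p) ((Fin n → ZMod p) ⧸ H) := by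
    have := Module.card_eq_pow_finrank (K := ZMod p) (V := (Fin n → ZMod p) ⧸ H)
    rwa [ZMod.card] at this
  rw [hcard]
  exact Nat.pow_le_pow_right hp (by omega)

/-- One refinement step: either few bad cosets, or we can refine with an energy gain. -/
theorem refine_step {r : ℕ} (H : Submodule (ZMod p) (Fin n → ZMod p))
    (f : Fin r → (Fin n → ZMod p) → ℝ) {ε : ℝ} (hε : 0 < ε) :
    ∃ H' : Submodule (ZMod p) (Fin n → ZMod p), H' ≤ H ∧
      Module.finrank (ZMod p) H ≤ Module.finrank (ZMod p) H'
        + Fintype.card ((Fin n → ZMod p) ⧸ H) ∧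
      energy H f + ((BadSet ε H f).card : ℝ) * ε^2 ≤ energy H' f := by
  classical
  set P : (Fin n → ZMod p) → Prop :=
    fun v => ∃ ir : (Fin r) × (Fin n → ZMod p),
      ε * (Fintype.card H : ℝ) < ‖sIrr H v (f ir.1) ir.2‖ with hP
  set wit : (Fin n → ZMod p) → (Fin n → ZMod p) :=
    fun v => if h : P v then h.choose.2 else 0 with hwitdef
  set Reps : Finset (Fin n → ZMod p) :=
    (Finset.univ : Finset ((Fin n → ZMod p) ⧸ H)).image Quotient.out with hReps
  set H' : Submodule (ZMod p) (Fin n → ZMod p) :=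
    H ⊓ Reps.inf (fun y => LinearMap.ker (dpL (wit y))) with hH'
  have hle : H' ≤ H := inf_le_left
  refine ⟨H', hle, ?_, ?_⟩
  · have h1 := finrank_inf_kers H Reps (fun y => dpL (wit y))
    rw [← hH'] at h1
    have h2 : Reps.card ≤ Fintype.card ((Fin n → ZMod p) ⧸ H) := by
      calc Reps.card ≤ (Finset.univ : Finset ((Fin n → ZMod p) ⧸ H)).card :=
            Finset.card_image_le
        _ = Fintype.card ((Fin n → ZMod p) ⧸ H) := Finset.card_univ
    omega
  · refine energy_gain H H' hle f hε ?_
    intro x hx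
    -- x is bad; move to the canonical representative of its coset
    set q : (Fin n → ZMod p) ⧸ H := Submodule.Quotient.mk x with hq
    set y : Fin n → ZMod p := q.out with hy
    have hyx : Submodule.Quotient.mk (p := H) y = Submodule.Quotient.mk (p := H) x := by
      rw [hy, hq]
      exact Quotient.out_eq _
    have hd : x - y ∈ H := by
      have := (Submodule.Quotient.eq H).mp hyx.symm
      simpa using this
    have hxy : x = y + (x - y) := by abel
    -- x bad gives a witness at x
    have hbadx : ¬ ∀ i, epsRegular ε H x (f i) := by
      have := Finset.mem_filter.mp hx
      exact this.2
    push_neg at hbadx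
    obtain ⟨i, hi⟩ := hbadx
    rw [epsRegular] at hi
    push_neg at hi
    obtain ⟨rr, hrr⟩ := hi
    have hk := card_subpos H
    have hbigx : ε * (Fintype.card H : ℝ) < ‖sIrr H x (f i) rr‖ := by
      have hnorm : ‖(∑ h : H, ((f i (x + h) - cosetAvg H x (f i) : ℝ) : ℂ) * ep p (rr ⬝ᵥ (x + h))) /
          (Fintype.card H : ℂ)‖ = ‖sIrr H x (f i) rr‖ / (Fintype.card H : ℝ) := by
        rw [norm_div, Complex.norm_natCast]
        rfl
      rw [hnorm, lt_div_iff₀ hk] at hrr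
      linarith [hrr]
    have hPy : P y := by
      refine ⟨(i, rr), ?_⟩
      have : sIrr H x (f i) rr = sIrr H y (f i) rr := by
        rw [hxy]
        exact sIrr_shift H y (x - y) hd (f i) rr
      rw [← this]
      exact hbigx
    have hwity : wit y = hPy.choose.2 := dif_pos hPy
    have hspec : ε * (Fintype.card H : ℝ)
        < ‖sIrr H y (f hPy.choose.1) hPy.choose.2‖ := hPy.choose_spec
    refine ⟨hPy.choose.1, hPy.choose.2, ?_, ?_⟩
    · intro h'
      have hyR : y ∈ Reps := by
        rw [hReps]
        exact Finset.mem_image_of_mem Quotient.out (Finset.mem_univ q)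
      have hmem : (h' : Fin n → ZMod p) ∈ LinearMap.ker (dpL (wit y)) := by
        have h2 : (h' : Fin n → ZMod p) ∈ Reps.inf (fun y => LinearMap.ker (dpL (wit y))) :=
          h'.2.2
        exact (Finset.inf_le hyR : Reps.inf (fun y => LinearMap.ker (dpL (wit y)))
          ≤ LinearMap.ker (dpL (wit y))) h2
      have := LinearMap.mem_ker.mp hmem
      rw [hwity] at this
      exact this
    · have : sIrr H x (f hPy.choose.1) hPy.choose.2
          = sIrr H y (f hPy.choose.1) hPy.choose.2 := by
        rw [hxy]
        exact sIrr_shift H y (x - y) hd _ _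
      rw [this]
      exact hspec

/-- The codimension bound sequence. -/
def cseq (p : ℕ) : ℕ → ℕ
  | 0 => 0
  | t+1 => cseq p t + p ^ cseq p t

/-- The iterated regularity increment. -/
theorem green {r : ℕ} (f : Fin r → (Fin n → ZMod p) → ℝ) {ε : ℝ} (hε : 0 < ε) (Nb : ℕ)
    (t : ℕ) :
    ∃ H : Submodule (ZMod p) (Fin n → ZMod p),
      n ≤ Module.finrank (ZMod p) H + cseq p t ∧
      (2 * p ^ Nb * (BadSet ε H f).card ≤ p ^ n ∨
        (t : ℝ) * (ε^2 * ((p:ℝ)^n) / (2 * (p:ℝ) ^ Nb)) ≤ energy H f) := by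
  induction t with
  | zero =>
    refine ⟨⊤, ?_, Or.inr ?_⟩
    · rw [finrank_top]
      simp [Module.finrank_pi]
    · simpa using energy_nonneg (⊤ : Submodule (ZMod p) (Fin n → ZMod p)) f
  | succ t ih =>
    obtain ⟨H, hcodim, hdisj⟩ := ih
    by_cases hterm : 2 * p ^ Nb * (BadSet ε H f).card ≤ p ^ n
    · refine ⟨H, ?_, Or.inl hterm⟩
      have : cseq p (t+1) = cseq p t + p ^ cseq p t := rfl
      omega
    · have hE : (t : ℝ) * (ε^2 * ((p:ℝ)^n) / (2 * (p:ℝ) ^ Nb)) ≤ energy H f := by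
        rcases hdisj with h | h
        · exact absurd h hterm
        · exact h
      obtain ⟨H', hle, hfr, hgain⟩ := refine_step H f hε
      refine ⟨H', ?_, Or.inr ?_⟩
      · have hq := card_quot_le H (c := cseq p t) hcodim
        have : cseq p (t+1) = cseq p t + p ^ cseq p t := rfl
        omega
      · have hp : 0 < p := (Fact.out : p.Prime).pos
        have hpn : (0:ℝ) < (p:ℝ)^n := by positivity
        have hpNb : (0:ℝ) < (p:ℝ)^Nb := by positivity
        have hBad : ((p:ℝ)^n) < 2 * (p:ℝ)^Nb * ((BadSet ε H f).card : ℝ) := by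
          have h' : p ^ n < 2 * p ^ Nb * (BadSet ε H f).card := Nat.lt_of_not_le hterm
          exact_mod_cast h'
        have hγ : ε^2 * ((p:ℝ)^n) / (2 * (p:ℝ)^Nb) ≤ ((BadSet ε H f).card : ℝ) * ε^2 := by
          rw [div_le_iff₀ (by positivity)]
          nlinarith [hBad, sq_nonneg ε, hε]
        push_cast
        nlinarith [hE, hgain, hγ]

/-- The terminal subspace: bounded codimension and few irregular cosets. -/
theorem green_final {r : ℕ} (f : Fin r → (Fin n → ZMod p) → ℝ)
    (hf : ∀ i x, f i x ∈ Set.Icc (0:ℝ) 1) {ε : ℝ} (hε : 0 < ε) (Nb : ℕ) :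
    ∃ H : Submodule (ZMod p) (Fin n → ZMod p),
      n ≤ Module.finrank (ZMod p) H
        + cseq p (Nat.ceil ((r:ℝ) * (2*(p:ℝ)^Nb)/ε^2) + 1) ∧
      2 * p ^ Nb * (BadSet ε H f).card ≤ p ^ n := by
  set T := Nat.ceil ((r:ℝ) * (2*(p:ℝ)^Nb)/ε^2) + 1 with hT
  obtain ⟨H, hcodim, hdisj⟩ := green f hε Nb T
  refine ⟨H, hcodim, ?_⟩
  rcases hdisj with h | h
  · exact h
  exfalso
  have hp : 0 < p := (Fact.out : p.Prime).pos
  have hpn : (0:ℝ) < (p:ℝ)^n := by positivity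
  have hpNb : (0:ℝ) < (p:ℝ)^Nb := by positivity
  have hγpos : (0:ℝ) < ε^2 * ((p:ℝ)^n) / (2 * (p:ℝ)^Nb) := by positivity
  have hEle := energy_le H hf
  have hcard : (Fintype.card (Fin n → ZMod p) : ℝ) = (p:ℝ)^n := by
    rw [Fintype.card_fun]
    push_cast [ZMod.card, Fintype.card_fin]
    ring
  rw [hcard] at hEle
  have hv : (T:ℝ) * (ε^2 * ((p:ℝ)^n) / (2*(p:ℝ)^Nb)) ≤ (r:ℝ) * ((p:ℝ)^n) :=
    le_trans h hEle
  have hAγ : (r:ℝ)*(2*(p:ℝ)^Nb)/ε^2 * (ε^2*((p:ℝ)^n)/(2*(p:ℝ)^Nb))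
      = (r:ℝ)*((p:ℝ)^n) := by
    field_simp
  have h2 : (T:ℝ) ≤ (r:ℝ) * (2*(p:ℝ)^Nb) / ε^2 :=
    le_of_mul_le_mul_right (by rw [hAγ]; exact hv) hγpos
  have h3 : T ≤ Nat.ceil ((r:ℝ)*(2*(p:ℝ)^Nb)/ε^2) := by
    have := le_trans h2 (Nat.le_ceil _)
    exact_mod_cast this
  omega

/-- Choosing a generic linear map avoiding the bad set. -/
theorem choose_g {Nb : ℕ} (hNb : 1 ≤ Nb) (Bad : Finset (Fin n → ZMod p))
    (hB : 2 * p ^ Nb * Bad.card ≤ p ^ n) :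
    ∃ g : Fin Nb → (Fin n → ZMod p), ∀ v : Fin Nb → ZMod p, v ≠ 0 →
      (∑ t, v t • g t) ∉ Bad := by
  classical
  have hp : 0 < p := (Fact.out : p.Prime).pos
  have hcardG : Fintype.card (Fin n → ZMod p) = p ^ n := by
    rw [Fintype.card_fun, ZMod.card, Fintype.card_fin]
  have hcardGG : Fintype.card (Fin Nb → (Fin n → ZMod p)) = p ^ (n * Nb) := by
    rw [Fintype.card_fun, hcardG, Fintype.card_fin, ← pow_mul]
  -- fibre bound
  have fiber : ∀ (v : Fin Nb → ZMod p), v ≠ 0 → ∀ w : Fin n → ZMod p,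
      (Finset.univ.filter
        (fun g : Fin Nb → (Fin n → ZMod p) => ∑ t, v t • g t = w)).card
        ≤ p ^ (n * (Nb - 1)) := by
    intro v hv w
    obtain ⟨t₀, ht₀⟩ := Function.ne_iff.mp hv
    have hinj : Set.InjOn (fun (g : Fin Nb → (Fin n → ZMod p)) =>
        (fun t : {t : Fin Nb // t ≠ t₀} => g t.1))
        (Finset.univ.filter
          (fun g : Fin Nb → (Fin n → ZMod p) => ∑ t, v t • g t = w)) := by
      intro g hg g' hg' hres
      have hgs := (Finset.mem_filter.mp hg).2
      have hgs' := (Finset.mem_filter.mp hg').2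
      have hoff : ∀ t : Fin Nb, t ≠ t₀ → g t = g' t := by
        intro t ht
        exact congrFun hres ⟨t, ht⟩
      have hsplit : ∀ gg : Fin Nb → (Fin n → ZMod p),
          ∑ t, v t • gg t = (∑ t ∈ Finset.univ \ {t₀}, v t • gg t) + v t₀ • gg t₀ := by
        intro gg
        exact (Finset.sum_eq_sum_sdiff_singleton_add (Finset.mem_univ t₀) _)
      have htails : ∑ t ∈ Finset.univ \ {t₀}, v t • g t
          = ∑ t ∈ Finset.univ \ {t₀}, v t • g' t := by
        refine Finset.sum_congr rfl fun t ht => ?_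
        have ht' : t ≠ t₀ := by
          simp only [Finset.mem_sdiff, Finset.mem_singleton] at ht
          exact ht.2
        rw [hoff t ht']
      have hsmul : v t₀ • g t₀ = v t₀ • g' t₀ := by
        have h1 := hsplit g
        have h2 := hsplit g'
        rw [hgs] at h1
        rw [hgs'] at h2
        rw [htails] at h1
        have := h1.symm.trans h2
        exact add_left_cancel this
      have ht0eq : g t₀ = g' t₀ := by
        have := congrArg (fun z => (v t₀)⁻¹ • z) hsmul
        simpa [smul_smul, inv_mul_cancel₀ ht₀] using this
      funext t
      by_cases ht : t = t₀
      · rw [ht, ht0eq]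
      · exact hoff t ht
    have hcard := Finset.card_le_card_of_injOn _ (fun _ _ => Finset.mem_univ _) hinj
    calc (Finset.univ.filter
        (fun g : Fin Nb → (Fin n → ZMod p) => ∑ t, v t • g t = w)).card
        ≤ (Finset.univ : Finset ({t : Fin Nb // t ≠ t₀} → (Fin n → ZMod p))).card := hcard
      _ = p ^ (n * (Nb - 1)) := by
          rw [Finset.card_univ, Fintype.card_fun, hcardG]
          have hsub : Fintype.card {t : Fin Nb // t ≠ t₀} = Nb - 1 := by
            have := Fintype.card_subtype_compl (fun t : Fin Nb => t = t₀)
            simp only [Fintype.card_subtype_eq, Fintype.card_fin] at this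
            exact this
          rw [hsub, ← pow_mul]
  -- union bound
  set badG : Finset (Fin Nb → (Fin n → ZMod p)) :=
    Finset.univ.filter (fun g => ∃ v : Fin Nb → ZMod p, v ≠ 0 ∧ (∑ t, v t • g t) ∈ Bad)
    with hbadG
  have hsubset : badG ⊆ (Finset.univ.filter (fun v : Fin Nb → ZMod p => v ≠ 0)).biUnion
      (fun v => Finset.univ.filter
        (fun g : Fin Nb → (Fin n → ZMod p) => (∑ t, v t • g t) ∈ Bad)) := by
    intro g hg
    obtain ⟨v, hv, hmem⟩ := (Finset.mem_filter.mp hg).2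
    exact Finset.mem_biUnion.mpr ⟨v, Finset.mem_filter.mpr ⟨Finset.mem_univ _, hv⟩,
      Finset.mem_filter.mpr ⟨Finset.mem_univ _, hmem⟩⟩
  have hperv : ∀ v : Fin Nb → ZMod p, v ≠ 0 →
      (Finset.univ.filter
        (fun g : Fin Nb → (Fin n → ZMod p) => (∑ t, v t • g t) ∈ Bad)).card
        ≤ Bad.card * p ^ (n * (Nb - 1)) := by
    intro v hv
    have hsub2 : (Finset.univ.filter
        (fun g : Fin Nb → (Fin n → ZMod p) => (∑ t, v t • g t) ∈ Bad))
        ⊆ Bad.biUnion (fun w => Finset.univ.filter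
          (fun g : Fin Nb → (Fin n → ZMod p) => ∑ t, v t • g t = w)) := by
      intro g hg
      exact Finset.mem_biUnion.mpr ⟨_, (Finset.mem_filter.mp hg).2,
        Finset.mem_filter.mpr ⟨Finset.mem_univ _, rfl⟩⟩
    calc (Finset.univ.filter
        (fun g : Fin Nb → (Fin n → ZMod p) => (∑ t, v t • g t) ∈ Bad)).card
        ≤ (Bad.biUnion (fun w => Finset.univ.filter
          (fun g : Fin Nb → (Fin n → ZMod p) => ∑ t, v t • g t = w))).card :=
          Finset.card_le_card hsub2
      _ ≤ ∑ w ∈ Bad, (Finset.univ.filter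
          (fun g : Fin Nb → (Fin n → ZMod p) => ∑ t, v t • g t = w)).card :=
          Finset.card_biUnion_le
      _ ≤ ∑ _w ∈ Bad, p ^ (n * (Nb - 1)) :=
          Finset.sum_le_sum fun w _ => fiber v hv w
      _ = Bad.card * p ^ (n * (Nb - 1)) := by
          rw [Finset.sum_const, smul_eq_mul]
  have hcount : badG.card ≤ p ^ Nb * (Bad.card * p ^ (n * (Nb - 1))) := by
    calc badG.card ≤ ((Finset.univ.filter (fun v : Fin Nb → ZMod p => v ≠ 0)).biUnion
        (fun v => Finset.univ.filter
          (fun g : Fin Nb → (Fin n → ZMod p) => (∑ t, v t • g t) ∈ Bad))).card :=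
          Finset.card_le_card hsubset
      _ ≤ ∑ v ∈ Finset.univ.filter (fun v : Fin Nb → ZMod p => v ≠ 0),
          (Finset.univ.filter
            (fun g : Fin Nb → (Fin n → ZMod p) => (∑ t, v t • g t) ∈ Bad)).card :=
          Finset.card_biUnion_le
      _ ≤ ∑ v ∈ Finset.univ.filter (fun v : Fin Nb → ZMod p => v ≠ 0),
          Bad.card * p ^ (n * (Nb - 1)) := by
          refine Finset.sum_le_sum fun v hv => hperv v (Finset.mem_filter.mp hv).2
      _ ≤ p ^ Nb * (Bad.card * p ^ (n * (Nb - 1))) := by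
          rw [Finset.sum_const, smul_eq_mul]
          have hcardv : (Finset.univ.filter (fun v : Fin Nb → ZMod p => v ≠ 0)).card
              ≤ p ^ Nb := by
            calc _ ≤ (Finset.univ : Finset (Fin Nb → ZMod p)).card := Finset.card_filter_le _ _
              _ = p ^ Nb := by rw [Finset.card_univ, Fintype.card_fun, ZMod.card,
                    Fintype.card_fin]
          exact Nat.mul_le_mul_right _ hcardv
  have hlt : badG.card < Fintype.card (Fin Nb → (Fin n → ZMod p)) := by
    rw [hcardGG]
    have key : 2 * (p ^ Nb * (Bad.card * p ^ (n * (Nb - 1)))) ≤ p ^ (n * Nb) := by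
      have h1 : 2 * (p ^ Nb * (Bad.card * p ^ (n * (Nb - 1))))
          = (2 * p ^ Nb * Bad.card) * p ^ (n * (Nb - 1)) := by ring
      rw [h1]
      calc (2 * p ^ Nb * Bad.card) * p ^ (n * (Nb - 1))
          ≤ p ^ n * p ^ (n * (Nb - 1)) := Nat.mul_le_mul_right _ hB
        _ = p ^ (n + n * (Nb - 1)) := by rw [← pow_add]
        _ = p ^ (n * Nb) := by
            congr 1
            cases Nb with
            | zero => omega
            | succ k =>
              simp only [Nat.add_sub_cancel]
              ring
    have hpos : 0 < p ^ (n * Nb) := pow_pos hp _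
    omega
  have : ∃ g, g ∉ badG := by
    by_contra hcon
    push_neg at hcon
    have : badG = Finset.univ := Finset.eq_univ_of_forall hcon
    rw [this, Finset.card_univ] at hlt
    omega
  obtain ⟨g, hg⟩ := this
  refine ⟨g, fun v hv hmem => hg ?_⟩
  exact Finset.mem_filter.mpr ⟨Finset.mem_univ _, ⟨v, hv, hmem⟩⟩

/-- Linear images of solutions are solutions. -/
theorem phi_solution {l m Nb : ℕ} (A : Matrix (Fin l) (Fin m) (ZMod p))
    (g : Fin Nb → (Fin n → ZMod p)) (x : Fin m → (Fin Nb → ZMod p))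
    (hx : ∀ i, ∑ j, A i j • x j = 0) (i : Fin l) :
    ∑ j, A i j • (∑ t, x j t • g t) = 0 := by
  have h1 : ∑ j, A i j • (∑ t, x j t • g t)
      = ∑ t, (∑ j, A i j * x j t) • g t := by
    calc ∑ j, A i j • (∑ t, x j t • g t)
        = ∑ j, ∑ t, (A i j * x j t) • g t := by
          refine Finset.sum_congr rfl fun j _ => ?_
          rw [Finset.smul_sum]
          exact Finset.sum_congr rfl fun t _ => by rw [smul_smul]
      _ = ∑ t, ∑ j, (A i j * x j t) • g t := Finset.sum_comm
      _ = ∑ t, (∑ j, A i j * x j t) • g t := by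
          refine Finset.sum_congr rfl fun t _ => ?_
          rw [Finset.sum_smul]
  rw [h1]
  have h2 : ∀ t, (∑ j, A i j * x j t) = 0 := by
    intro t
    have := congrFun (hx i) t
    simpa [Finset.sum_apply, Pi.smul_apply, smul_eq_mul] using this
  refine Finset.sum_eq_zero fun t _ => ?_
  rw [h2 t, zero_smul]

end SelectAux

/-- selecting multiple subcosets: for a partition-regular matrix `A`,
`ε, δ > 0` and `r ≥ 1`, for all sufficiently large `n` and all `f₁,...,f_r : F_p^n → [0,1]`
there exist a subspace `H` of bounded codimension and `z₁,...,z_m` with `Az = 0`, every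
coset `z_j + H` `ε`-regular for every `f_i`, and for each colour `i` the averages of `f_i`
on the cosets `z_j + H` all below `δ` or all at least `δ`. -/
theorem select_multiple_subcosets {p : ℕ} [Fact p.Prime] (l m r : ℕ) (hr : 1 ≤ r)
    (ε δ : ℝ) (hε : 0 < ε) (hδ : 0 < δ)
    (A : Matrix (Fin l) (Fin m) (ZMod p)) (hA : PartitionRegular p l m A) :
    ∃ C N : ℕ, ∀ n ≥ N, ∀ f : Fin r → (Fin n → ZMod p) → ℝ,
      (∀ i x, f i x ∈ Set.Icc (0 : ℝ) 1) →
      ∃ (H : Submodule (ZMod p) (Fin n → ZMod p)) (z : Fin m → (Fin n → ZMod p)),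
        Module.finrank (ZMod p) (Fin n → ZMod p) ≤ Module.finrank (ZMod p) H + C ∧
        (∀ i, ∑ j : Fin m, A i j • z j = 0) ∧
        (∀ j i, epsRegular ε H (z j) (f i)) ∧
        (∀ i : Fin r, (∀ j, cosetAvg H (z j) (f i) < δ) ∨
          ∀ j, δ ≤ cosetAvg H (z j) (f i)) := by
  classical
  rcases Nat.eq_zero_or_pos m with hm | hm
  · subst hm
    refine ⟨0, 0, fun n _ f hf => ⟨⊤, fun j => 0, ?_, ?_, ?_, ?_⟩⟩
    · rw [finrank_top]
      omega
    · intro i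
      simp
    · intro j
      exact j.elim0
    · intro i
      exact Or.inl (fun j => j.elim0)
  · set κ := Fintype.card (Finset (Fin r) × Bool) with hκdef
    have hκ : 0 < κ := Fintype.card_pos
    obtain ⟨N₀, hN₀⟩ := hA κ hκ
    set Nb := max N₀ 1 with hNbdef
    refine ⟨SelectAux.cseq p (Nat.ceil ((r:ℝ) * (2*(p:ℝ)^Nb)/ε^2) + 1), 0,
      fun n _ f hf => ?_⟩
    obtain ⟨H, hcodim, hterm⟩ := SelectAux.green_final f hf hε Nb
    obtain ⟨g, hg⟩ := SelectAux.choose_g (le_max_right N₀ 1) (SelectAux.BadSet ε H f) hterm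
    set e := Fintype.equivFin (Finset (Fin r) × Bool) with he
    set χ₀ : (Fin n → ZMod p) → Finset (Fin r) × Bool := fun v =>
      (Finset.univ.filter (fun i => δ ≤ cosetAvg H v (f i)),
        if v ∈ SelectAux.BadSet ε H f then true else false) with hχ₀
    obtain ⟨x, hxsol, hxnz, hxmono⟩ := hN₀ Nb (le_max_left N₀ 1)
      (fun w : Fin Nb → ZMod p => e (χ₀ (∑ t, w t • g t)))
    have j₀ : Fin m := ⟨0, hm⟩
    have hmono' : ∀ j, χ₀ (∑ t, x j t • g t) = χ₀ (∑ t, x j₀ t • g t) :=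
      fun j => e.injective (hxmono j j₀)
    have hz₀ : (∑ t, x j₀ t • g t) ∉ SelectAux.BadSet ε H f := hg (x j₀) (hxnz j₀)
    have hnotbad : ∀ j, (∑ t, x j t • g t) ∉ SelectAux.BadSet ε H f := by
      intro j hmem
      have h2 := congrArg Prod.snd (hmono' j)
      simp only [hχ₀] at h2
      rw [if_pos hmem, if_neg hz₀] at h2
      exact Bool.noConfusion h2
    have hreg : ∀ j i, epsRegular ε H (∑ t, x j t • g t) (f i) := by
      intro j i
      have hb := hnotbad j
      have hnn : ¬ ¬ ∀ i, epsRegular ε H (∑ t, x j t • g t) (f i) := by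
        intro hneg
        exact hb (Finset.mem_filter.mpr ⟨Finset.mem_univ _, hneg⟩)
      exact (not_not.mp hnn) i
    refine ⟨H, fun j => ∑ t, x j t • g t, ?_,
      fun i => SelectAux.phi_solution A g x hxsol i, hreg, ?_⟩
    · have hfr : Module.finrank (ZMod p) (Fin n → ZMod p) = n := by
        simp [Module.finrank_pi]
      omega
    · intro i
      have hpat : ∀ j, (Finset.univ.filter (fun i' => δ ≤ cosetAvg H (∑ t, x j t • g t) (f i')))
          = Finset.univ.filter (fun i' => δ ≤ cosetAvg H (∑ t, x j₀ t • g t) (f i')) := by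
        intro j
        have h3 := congrArg Prod.fst (hmono' j)
        simpa [hχ₀] using h3
      by_cases hi : δ ≤ cosetAvg H (∑ t, x j₀ t • g t) (f i)
      · refine Or.inr fun j => ?_
        have hmem : i ∈ Finset.univ.filter
            (fun i' => δ ≤ cosetAvg H (∑ t, x j t • g t) (f i')) := by
          rw [hpat j]
          exact Finset.mem_filter.mpr ⟨Finset.mem_univ _, hi⟩
        exact (Finset.mem_filter.mp hmem).2
      · refine Or.inl fun j => ?_
        by_contra hcon
        push_neg at hcon
        have hmem : i ∈ Finset.univ.filter
            (fun i' => δ ≤ cosetAvg H (∑ t, x j t • g t) (f i')) :=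
          Finset.mem_filter.mpr ⟨Finset.mem_univ _, hcon⟩
        rw [hpat j] at hmem
        exact hi (Finset.mem_filter.mp hmem).2
end
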